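/- Let η be an admissible map. Then for every nonempty subset Π' ⊆ Π_η there exists a root β ∈ Π' such that η(β, γ) ≥ 0 for all γ ∈ Π'. -/

import Mathlib

open scoped RealInnerProductSpace

lemma aux_inner_le {E : Type*} [NormedAddCommGroup E] [InnerProductSpace ℝ E] {α β : E}
    (hα : α ≠ 0) (hβ : β ≠ 0)
    (h1 : 2 * ⟪α, β⟫ / ⟪α, α⟫ ≤ -1)
    (h2 : ∃ n : ℤ, 2 * ⟪β, α⟫ / ⟪β, β⟫ = (n : ℝ)) :
    ⟪α, β⟫ ≤ -(‖α‖ * ‖β‖) / 2 := by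
  have pa : (0:ℝ) < ⟪α, α⟫ := by
    rw [real_inner_self_eq_norm_sq]; exact pow_pos (norm_pos_iff.mpr hα) 2
  have pb : (0:ℝ) < ⟪β, β⟫ := by
    rw [real_inner_self_eq_norm_sq]; exact pow_pos (norm_pos_iff.mpr hβ) 2
  have e1 : 2 * ⟪α, β⟫ ≤ -⟪α, α⟫ := by
    have := (div_le_iff₀ pa).1 h1
    linarith
  have hx : ⟪α, β⟫ < 0 := by linarith
  obtain ⟨n, hn⟩ := h2
  have hcomm : ⟪β, α⟫ = ⟪α, β⟫ := real_inner_comm α β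
  have hn' : 2 * ⟪α, β⟫ = (n : ℝ) * ⟪β, β⟫ := by
    field_simp at hn
    rw [hcomm] at hn
    linarith [hn]
  have hneg : (n : ℝ) < 0 := by
    by_contra hc
    push_neg at hc
    nlinarith
  have hn1 : (n : ℝ) ≤ -1 := by
    have : n < 0 := by exact_mod_cast hneg
    have : n ≤ -1 := by omega
    exact_mod_cast this
  have e2 : 2 * ⟪α, β⟫ ≤ -⟪β, β⟫ := by nlinarith
  have na : ⟪α, α⟫ = ‖α‖ ^ 2 := real_inner_self_eq_norm_sq α
  have nb : ⟪β, β⟫ = ‖β‖ ^ 2 := real_inner_self_eq_norm_sq β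
  nlinarith [sq_nonneg (‖α‖ - ‖β‖), norm_nonneg α, norm_nonneg β]

/-- Let `η` be an admissible map on a set `P` of simple roots.  Then every
nonempty subset `P' ⊆ P_η = {α ∈ P : η α α = 1}` contains a root `β` with `η β γ ≥ 0`
for all `γ ∈ P'`. -/
theorem admissible_map_exists_nonnegative_root
    {E : Type*} [NormedAddCommGroup E] [InnerProductSpace ℝ E]
    (P : Finset E)
    (h0 : ∀ α ∈ P, α ≠ (0 : E))
    (hli : LinearIndependent ℝ (fun a : P => (a : E)))
    (hobtuse : ∀ α ∈ P, ∀ β ∈ P, α ≠ β → ⟪α, β⟫ ≤ 0)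
    (hcart : ∀ α ∈ P, ∀ β ∈ P, α ≠ β → ∃ n : ℤ, 2 * ⟪α, β⟫ / ⟪α, α⟫ = (n : ℝ))
    (η : E → E → ℤ)
    (hval : ∀ α ∈ P, ∀ β ∈ P, η α β ∈ ({-3, -2, -1, 0, 1} : Set ℤ))
    (am1 : ∀ α ∈ P, η α α = 0 ∨ η α α = 1)
    (am2 : ∀ α ∈ P, η α α = 0 → ∀ β ∈ P, η α β = 0 ∧ η β α = 0)
    (am3 : ∀ α ∈ P, ∀ β ∈ P, η α β = 1 → ∀ γ ∈ P, η α γ = η β γ)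
    (am4 : ∀ α ∈ P, ∀ β ∈ P, η α β < 0 → η β α = 0)
    (am5 : ∀ α ∈ P, ∀ β ∈ P, α ≠ β → 2 * ⟪α, β⟫ / ⟪α, α⟫ ≤ (η α β : ℝ))
    (P' : Finset E)
    (hP' : ∀ α ∈ P', α ∈ P ∧ η α α = 1)
    (hne : P'.Nonempty) :
    ∃ β ∈ P', ∀ γ ∈ P', 0 ≤ η β γ := by
  classical
  by_contra hcon
  push_neg at hcon
  -- choose for each β an out-neighbour f β with η β (f β) < 0
  have h' : ∀ β : E, ∃ γ : E, β ∈ P' → γ ∈ P' ∧ η β γ < 0 := by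
    intro β
    by_cases hb : β ∈ P'
    · obtain ⟨γ, hγ, hn⟩ := hcon β hb
      exact ⟨γ, fun _ => ⟨hγ, hn⟩⟩
    · exact ⟨0, fun c => absurd c hb⟩
  choose f hf using h'
  have hfP' : ∀ β ∈ P', f β ∈ P' := fun β hb => (hf β hb).1
  have hfneg : ∀ β ∈ P', η β (f β) < 0 := fun β hb => (hf β hb).2
  have hsubP : ∀ β ∈ P', β ∈ P := fun β hb => (hP' β hb).1
  have hfne : ∀ β ∈ P', f β ≠ β := by
    intro β hb he
    have := hfneg β hb
    rw [he] at this
    have := (hP' β hb).2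
    omega
  have hff : ∀ β ∈ P', f (f β) ≠ β := by
    intro β hb he
    have h1 : η (f β) β = 0 := am4 β (hsubP β hb) (f β) (hsubP _ (hfP' β hb)) (hfneg β hb)
    have h2 := hfneg (f β) (hfP' β hb)
    rw [he] at h2
    omega
  -- the key estimate for pairs (β, f β)
  have hkey : ∀ β ∈ P', ⟪β, f β⟫ ≤ -(‖β‖ * ‖f β‖) / 2 := by
    intro β hb
    have hbP : β ∈ P := hsubP β hb
    have hfbP : f β ∈ P := hsubP _ (hfP' β hb)
    have hne2 : β ≠ f β := (hfne β hb).symm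
    have hle : ((η β (f β) : ℤ) : ℝ) ≤ -1 := by
      have := hfneg β hb
      have : η β (f β) ≤ -1 := by omega
      exact_mod_cast this
    exact aux_inner_le (h0 β hbP) (h0 _ hfbP)
      (le_trans (am5 β hbP (f β) hfbP hne2) hle)
      (hcart (f β) hfbP β hbP hne2.symm)
  -- the vector v
  set F : E × E → ℝ := fun p => (‖p.1‖⁻¹ * ‖p.2‖⁻¹) * ⟪p.1, p.2⟫ with hF
  set v : E := ∑ β ∈ P', ‖β‖⁻¹ • β with hv
  have hvv : ⟪v, v⟫ = ∑ p ∈ P' ×ˢ P', F p := by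
    rw [hv, Finset.sum_product, sum_inner]
    refine Finset.sum_congr rfl fun α hα => ?_
    rw [real_inner_smul_left, inner_sum, Finset.mul_sum]
    refine Finset.sum_congr rfl fun β hβ => ?_
    rw [real_inner_smul_right, hF]
    ring
  -- diagonal contribution
  have hdiag : ∑ p ∈ P'.diag, F p = (P'.card : ℝ) := by
    have himg : P'.diag = P'.image (fun a => (a, a)) := by
      ext ⟨a, b⟩
      simp only [Finset.mem_diag, Finset.mem_image]
      constructor
      · rintro ⟨h1, rfl⟩
        exact ⟨a, h1, rfl⟩
      · rintro ⟨x, hx, hxe⟩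
        cases hxe
        exact ⟨hx, rfl⟩
    rw [himg, Finset.sum_image (by intro a _ b _ h; exact (Prod.ext_iff.1 h).1)]
    rw [Finset.sum_congr rfl (fun α hα => ?_), Finset.sum_const, nsmul_eq_mul, mul_one]
    show F (α, α) = 1
    have hα0 : α ≠ 0 := h0 α (hsubP α hα)
    have : ⟪α, α⟫ = ‖α‖ ^ 2 := real_inner_self_eq_norm_sq α
    rw [hF]
    simp only []
    rw [this]
    have hn : ‖α‖ ≠ 0 := norm_ne_zero_iff.mpr hα0
    field_simp
  -- edge set T
  set T : Finset (E × E) := P'.image (fun β => (β, f β)) ∪ P'.image (fun β => (f β, β)) with hT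
  have hTsub : T ⊆ P'.offDiag := by
    intro p hp
    rw [hT, Finset.mem_union] at hp
    rcases hp with hp | hp <;> obtain ⟨β, hb, rfl⟩ := Finset.mem_image.1 hp
    · exact Finset.mem_offDiag.2 ⟨hb, hfP' β hb, (hfne β hb).symm⟩
    · exact Finset.mem_offDiag.2 ⟨hfP' β hb, hb, hfne β hb⟩
  have hTcard : T.card = 2 * P'.card := by
    rw [hT, Finset.card_union_of_disjoint, Finset.card_image_of_injective _
        (fun a b h => (Prod.ext_iff.1 h).1),
      Finset.card_image_of_injective _ (fun a b h => (Prod.ext_iff.1 h).2)]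
    · ring
    · rw [Finset.disjoint_left]
      rintro p hp1 hp2
      obtain ⟨β, hb, rfl⟩ := Finset.mem_image.1 hp1
      obtain ⟨γ, hg, hgeq⟩ := Finset.mem_image.1 hp2
      have h1 : f γ = β := (Prod.ext_iff.1 hgeq).1
      have h2 : γ = f β := (Prod.ext_iff.1 hgeq).2
      exact hff β hb (by rw [← h2, h1])
  -- each term of T is ≤ -1/2
  have hTbound : ∀ p ∈ T, F p ≤ -(1/2 : ℝ) := by
    intro p hp
    have key : ∀ α ∈ P', F (α, f α) ≤ -(1/2 : ℝ) := by
      intro α hα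
      have hα0 : α ≠ 0 := h0 α (hsubP α hα)
      have hfα0 : f α ≠ 0 := h0 _ (hsubP _ (hfP' α hα))
      have hna : (0:ℝ) < ‖α‖ := norm_pos_iff.mpr hα0
      have hnb : (0:ℝ) < ‖f α‖ := norm_pos_iff.mpr hfα0
      have hk := hkey α hα
      have step : F (α, f α) ≤ (‖α‖⁻¹ * ‖f α‖⁻¹) * (-(‖α‖ * ‖f α‖) / 2) := by
        rw [hF]
        exact mul_le_mul_of_nonneg_left hk (by positivity)
      have heq : (‖α‖⁻¹ * ‖f α‖⁻¹) * (-(‖α‖ * ‖f α‖) / 2) = -(1/2 : ℝ) := by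
        field_simp
      linarith [step, heq.le]
    rw [hT, Finset.mem_union] at hp
    rcases hp with hp | hp <;> obtain ⟨β, hb, rfl⟩ := Finset.mem_image.1 hp
    · exact key β hb
    · have : F (f β, β) = F (β, f β) := by
        rw [hF]
        simp only []
        rw [real_inner_comm]
        ring
      rw [this]
      exact key β hb
  -- every off-diagonal term is ≤ 0
  have hoffnp : ∀ p ∈ P'.offDiag, F p ≤ 0 := by
    intro p hp
    obtain ⟨h1, h2, h3⟩ := Finset.mem_offDiag.1 hp
    rw [hF]
    exact mul_nonpos_of_nonneg_of_nonpos (by positivity)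
      (hobtuse p.1 (hsubP _ h1) p.2 (hsubP _ h2) h3)
  -- sum over offDiag ≤ -card
  have hoff : ∑ p ∈ P'.offDiag, F p ≤ -(P'.card : ℝ) := by
    have hsplit : ∑ p ∈ P'.offDiag \ T, F p + ∑ p ∈ T, F p = ∑ p ∈ P'.offDiag, F p :=
      Finset.sum_sdiff hTsub
    have h1 : ∑ p ∈ T, F p ≤ -(P'.card : ℝ) := by
      calc ∑ p ∈ T, F p ≤ ∑ _p ∈ T, -(1/2 : ℝ) := Finset.sum_le_sum hTbound
        _ = -(P'.card : ℝ) := by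
          rw [Finset.sum_const, hTcard, nsmul_eq_mul]
          push_cast
          ring
    have h2 : ∑ p ∈ P'.offDiag \ T, F p ≤ 0 :=
      Finset.sum_nonpos fun p hp => hoffnp p (Finset.mem_sdiff.1 hp).1
    linarith
  -- conclude ⟪v, v⟫ ≤ 0, hence v = 0
  have hvv0 : v = 0 := by
    have hle : ⟪v, v⟫ ≤ 0 := by
      rw [hvv, ← Finset.diag_union_offDiag P',
        Finset.sum_union (Finset.disjoint_diag_offDiag P'), hdiag]
      linarith
    have hge : (0:ℝ) ≤ ⟪v, v⟫ := real_inner_self_nonneg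
    have : ⟪v, v⟫ = 0 := le_antisymm hle hge
    exact inner_self_eq_zero.1 this
  -- contradiction with linear independence
  obtain ⟨β₀, hβ₀⟩ := hne
  set s : Finset ↥P := P.attach.filter (fun a => ↑a ∈ P') with hs
  have hsum : ∑ a ∈ s, ‖(a:E)‖⁻¹ • (a:E) = v := by
    rw [hs, Finset.sum_filter, Finset.sum_attach P (fun x => if x ∈ P' then ‖x‖⁻¹ • x else 0),
      ← Finset.sum_filter, Finset.filter_mem_eq_inter,
      Finset.inter_eq_right.mpr (fun x hx => hsubP x hx), hv]
  have hz := linearIndependent_iff'.1 hli s (fun a => ‖(a:E)‖⁻¹)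
    (by rw [hsum, hvv0]) ⟨β₀, hsubP β₀ hβ₀⟩
    (Finset.mem_filter.2 ⟨Finset.mem_attach _ _, hβ₀⟩)
  exact norm_ne_zero_iff.mpr (h0 β₀ (hsubP β₀ hβ₀)) (inv_eq_zero.1 hz)
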